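/- arXiv:1904.12446 — 3 statements merged into one kernel-verified Lean document; each statement's English description precedes it below -/
import Mathlib

section
/- Let R : ℕ → ℕ → ℕ satisfy R(0, l) = 0 for all l, R(h, 0) = 0 for all h, and R(h, l) ≤ 1 + n · R(h-1, l-1) + R(h-1, l) for all h, l ≥ 1, where n ≥ 1 is a fixed natural number. Then R(h, l) ≤ n^l · (h+l choose l) - 1 for all h, l. -/
theorem recurrence_bound (n : ℕ) (hn : 1 ≤ n) (R : ℕ → ℕ → ℕ)
    (h0 : ∀ l, R 0 l = 0) (h0' : ∀ h, R h 0 = 0)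
    (hrec : ∀ h l, 1 ≤ h → 1 ≤ l →
      R h l ≤ 1 + n * R (h - 1) (l - 1) + R (h - 1) l) :
    ∀ h l, R h l ≤ n ^ l * Nat.choose (h + l) l - 1 := by
  intro h
  induction h with
  | zero =>
    intro l
    rw [h0]
    exact Nat.zero_le _
  | succ h ih =>
    intro l
    cases l with
    | zero =>
      rw [h0']
      exact Nat.zero_le _
    | succ l =>
      have key := hrec (h+1) (l+1) (Nat.le_add_left 1 h) (Nat.le_add_left 1 l)
      simp only [Nat.add_sub_cancel] at key
      have ih1 := ih l
      have ih2 := ih (l+1)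
      set A := n ^ l * Nat.choose (h + l) l with hA
      set B := n ^ (l+1) * Nat.choose (h + (l+1)) (l+1) with hB
      have hA1 : 1 ≤ A := Nat.one_le_iff_ne_zero.mpr <| Nat.mul_ne_zero
        (Nat.pow_pos hn : 0 < n ^ l).ne'
        (Nat.choose_pos (Nat.le_add_left l h)).ne'
      have hB1 : 1 ≤ B := Nat.one_le_iff_ne_zero.mpr <| Nat.mul_ne_zero
        (Nat.pow_pos hn : 0 < n ^ (l+1)).ne'
        (Nat.choose_pos (Nat.le_add_left (l+1) h)).ne'
      have hnR : n * R h l ≤ n * (A - 1) := Nat.mul_le_mul_left n ih1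
      have hnA : n * (A - 1) + n = n * A := by
        rw [← Nat.mul_succ, Nat.succ_eq_add_one, Nat.sub_add_cancel hA1]
      -- Pascal: C(h+l+2, l+1) = C(h+l+1, l) + C(h+l+1, l+1)
      have pascal : Nat.choose (h + 1 + (l + 1)) (l + 1)
          = Nat.choose (h + l + 1) l + Nat.choose (h + l + 1) (l + 1) := by
        have := Nat.succ_sub_one (h + l + 1)
        have : h + 1 + (l + 1) = (h + l + 1) + 1 := by ring
        rw [this, Nat.choose_succ_succ' (h + l + 1) l]
      have hmono : Nat.choose (h + l) l ≤ Nat.choose (h + l + 1) l :=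
        Nat.choose_le_choose l (Nat.le_succ _)
      have hT : n * A + B ≤ n ^ (l+1) * Nat.choose (h + 1 + (l + 1)) (l + 1) := by
        rw [pascal, Nat.mul_add, hA, hB]
        have : n * (n ^ l * Nat.choose (h + l) l) ≤ n ^ (l+1) * Nat.choose (h + l + 1) l := by
          rw [pow_succ, mul_comm (n^l) n, mul_assoc]
          exact Nat.mul_le_mul_left _ (Nat.mul_le_mul_left _ hmono)
        have h2 : h + (l + 1) = h + l + 1 := by ring
        rw [h2]
        omega
      omega
end

section
/- Fact (disjoint opponent attractor preserves dominions): if S is a dominion for player P in a game G, and X is a set of nodes of G with S ∩ X = ∅, then S ∩ Atr_{P̄}(G, X) = ∅ and S is a dominion for P in G \ Atr_{P̄}(G, X), where P̄ is the opponent of P. -/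
open Filter

/-- A parity game graph on node set `V`: edges, an owner for each node
(`true` = the player `P` under consideration is Even, `false` = Odd),
and a priority for each node. -/
structure PGame (V : Type*) where
  edge : V → V → Prop
  owner : V → Bool
  prio : V → ℕ

namespace PGame

variable {V : Type*}

/-- The induced subgame `G \ A`: remove all nodes of `A`
and all edges touching `A`. -/
def restrict (G : PGame V) (A : Set V) : PGame V where
  edge u v := G.edge u v ∧ u ∉ A ∧ v ∉ A
  owner := G.owner
  prio := G.prio

/-- One step of the attractor construction for player `P` and target set `N`:
`F A` consists of `N`, the `P`-nodes with a successor in `A`, and the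
opponent nodes all of whose successors are in `A`.  It is a monotone
operator on sets of nodes. -/
def attrOp (G : PGame V) (P : Bool) (N : Set V) : Set V →o Set V where
  toFun A := N ∪ {v | G.owner v = P ∧ ∃ u, G.edge v u ∧ u ∈ A}
      ∪ {v | G.owner v ≠ P ∧ ∀ u, G.edge v u → u ∈ A}
  monotone' := by
    intro A B hAB v hv
    rcases hv with (hv | ⟨h1, u, hu, huA⟩) | ⟨h1, h2⟩
    · exact Or.inl (Or.inl hv)
    · exact Or.inl (Or.inr ⟨h1, u, hu, hAB huA⟩)
    · exact Or.inr ⟨h1, fun u hu => hAB (h2 u hu)⟩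

/-- The attractor of `N` for player `P`: the least fixed point of the
monotone operator `attrOp G P N`. -/
def Atr (G : PGame V) (P : Bool) (N : Set V) : Set V :=
  OrderHom.lfp (attrOp G P N)

/-- The history (as a list of visited nodes) of the play starting at `v`
in which player `P` uses strategy `σ` and the opponent uses strategy `τ`
(strategies map the history so far to the chosen next node). -/
def histList (G : PGame V) (P : Bool) (σ τ : List V → V) (v : V) : ℕ → List V
  | 0 => [v]
  | i + 1 =>
      let l := histList G P σ τ v i
      l ++ [if G.owner (l.getLast?.getD v) = P then σ l else τ l]

/-- The node visited at time `i` by the play starting at `v` in which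
player `P` uses strategy `σ` and the opponent uses strategy `τ`. -/
def play (G : PGame V) (P : Bool) (σ τ : List V → V) (v : V) (i : ℕ) : V :=
  (histList G P σ τ v i).getLast?.getD v

/-- The parity winning condition for player `P` (Even if `P = true`,
Odd if `P = false`): the highest priority seen infinitely often, i.e. the
limit superior of the sequence of priorities, has the parity of `P`. -/
def WinsParity (G : PGame V) (P : Bool) (ρ : ℕ → V) : Prop :=
  (Filter.limsup (fun i => G.prio (ρ i)) Filter.atTop) % 2 = (if P then 0 else 1)

/-- Along the play from `v` determined by `σ` and `τ`, player `P`
always makes legal moves (i.e. moves along edges of `G`). -/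
def PLegal (G : PGame V) (P : Bool) (σ τ : List V → V) (v : V) : Prop :=
  ∀ i, G.owner (play G P σ τ v i) = P →
    G.edge (play G P σ τ v i) (play G P σ τ v (i + 1))

/-- Along the play from `v` determined by `σ` and `τ`, the opponent of `P`
always makes legal moves. -/
def OppLegal (G : PGame V) (P : Bool) (σ τ : List V → V) (v : V) : Prop :=
  ∀ i, G.owner (play G P σ τ v i) ≠ P →
    G.edge (play G P σ τ v i) (play G P σ τ v (i + 1))

/-- `S` is a dominion for player `P` in `G`: from every node of `S`,
player `P` has a strategy `σ` such that, against every opponent strategy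
`τ` whose moves along the resulting play are legal, `σ`'s moves are legal,
the play stays in `S` forever, and `P` wins the parity condition. -/
def Dominion (G : PGame V) (P : Bool) (S : Set V) : Prop :=
  ∀ v ∈ S, ∃ σ : List V → V, ∀ τ : List V → V,
    OppLegal G P σ τ v →
      PLegal G P σ τ v ∧ (∀ i, play G P σ τ v i ∈ S) ∧
        WinsParity G P (play G P σ τ v)

/-- The winning region of player `P` in `G`: the set of nodes from which
`P` has a strategy `σ` such that, against every opponent strategy whose
moves along the resulting play are legal, `σ`'s moves are legal and `P`
wins the parity condition. -/
def WinRegion (G : PGame V) (P : Bool) : Set V :=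
  {v | ∃ σ : List V → V, ∀ τ : List V → V,
    OppLegal G P σ τ v →
      PLegal G P σ τ v ∧ WinsParity G P (play G P σ τ v)}

section Aux

variable {V : Type*}

lemma histList_restrict (G : PGame V) (A : Set V) (P : Bool) (σ τ : List V → V)
    (v : V) (i : ℕ) :
    histList (G.restrict A) P σ τ v i = histList G P σ τ v i := by
  induction i with
  | zero => rfl
  | succ n ih =>
    simp only [histList, ih]
    rfl

lemma play_restrict (G : PGame V) (A : Set V) (P : Bool) (σ τ : List V → V)
    (v : V) (i : ℕ) :
    play (G.restrict A) P σ τ v i = play G P σ τ v i := by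
  simp [play, histList_restrict]

lemma play_zero (G : PGame V) (P : Bool) (σ τ : List V → V) (v : V) :
    play G P σ τ v 0 = v := by
  simp [play, histList]

lemma play_succ (G : PGame V) (P : Bool) (σ τ : List V → V) (v : V) (i : ℕ) :
    play G P σ τ v (i + 1) =
      (if G.owner (play G P σ τ v i) = P then σ (histList G P σ τ v i)
       else τ (histList G P σ τ v i)) := by
  simp [play, histList]
  congr

lemma histList_length (G : PGame V) (P : Bool) (σ τ : List V → V) (v : V) (i : ℕ) :
    (histList G P σ τ v i).length = i + 1 := by
  induction i with
  | zero => rfl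
  | succ n ih => simp [histList, ih]

lemma dominion_P_succ (G : PGame V) (hsucc : ∀ v, ∃ u, G.edge v u) (P : Bool)
    (S : Set V) (hS : Dominion G P S) {v : V} (hv : v ∈ S) (hP : G.owner v = P) :
    ∃ u, G.edge v u ∧ u ∈ S := by
  obtain ⟨σ, hσ⟩ := hS v hv
  set τ : List V → V := fun l => Classical.choose (hsucc (l.getLast?.getD v)) with hτdef
  have hτ : OppLegal G P σ τ v := by
    intro i hi
    rw [play_succ, if_neg hi]
    exact Classical.choose_spec (hsucc (play G P σ τ v i))
  obtain ⟨hleg, hmem, _⟩ := hσ τ hτ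
  refine ⟨play G P σ τ v 1, ?_, hmem 1⟩
  have := hleg 0
  rw [play_zero] at this
  exact this hP

lemma dominion_opp_succ (G : PGame V) (hsucc : ∀ v, ∃ u, G.edge v u) (P : Bool)
    (S : Set V) (hS : Dominion G P S) {v u : V} (hv : v ∈ S) (hP : G.owner v ≠ P)
    (he : G.edge v u) : u ∈ S := by
  classical
  obtain ⟨σ, hσ⟩ := hS v hv
  set τ : List V → V :=
    fun l => if l = [v] then u else Classical.choose (hsucc (l.getLast?.getD v)) with hτdef
  have hτ : OppLegal G P σ τ v := by
    intro i hi
    rw [play_succ, if_neg hi]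
    cases i with
    | zero =>
      have h0 : histList G P σ τ v 0 = [v] := rfl
      rw [play_zero, h0]
      simp only [hτdef, if_pos rfl]
      exact he
    | succ n =>
      have hne : histList G P σ τ v (n + 1) ≠ [v] := by
        intro h
        have := histList_length G P σ τ v (n + 1)
        rw [h] at this
        simp at this
      have hτn : τ (histList G P σ τ v (n + 1)) =
          Classical.choose (hsucc ((histList G P σ τ v (n + 1)).getLast?.getD v)) := if_neg hne
      rw [hτn]
      exact Classical.choose_spec (hsucc (play G P σ τ v (n + 1)))
  obtain ⟨_, hmem, _⟩ := hσ τ hτ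
  have h1 : play G P σ τ v 1 = u := by
    rw [play_succ, play_zero, if_neg hP]
    have h0 : histList G P σ τ v 0 = [v] := rfl
    rw [h0]
    simp [hτdef]
  rw [← h1]
  exact hmem 1

end Aux

end PGame


/-- Fact 2 of the paper: if `S` is a dominion for `P` and `X` is disjoint
from `S`, then `S` does not meet the opponent's attractor of `X`, and `S`
is still a dominion for `P` in the subgame obtained by removing the
opponent's attractor of `X`. -/
theorem dominion_remove_opponent_attractor {V : Type*} [Fintype V]
    (G : PGame V) (hsucc : ∀ v, ∃ u, G.edge v u)
    (hnoself : ∀ v, ¬ G.edge v v) (P : Bool) (S X : Set V)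
    (hS : PGame.Dominion G P S) (hdisj : S ∩ X = ∅) :
    S ∩ PGame.Atr G (!P) X = ∅ ∧
      PGame.Dominion (G.restrict (PGame.Atr G (!P) X)) P S := by
  set A := PGame.Atr G (!P) X with hA
  have hAtr : A ⊆ Sᶜ := by
    have hstep : (PGame.attrOp G (!P) X) Sᶜ ≤ Sᶜ := by
      intro v hv hvS
      rcases hv with (hvX | ⟨h1, u, hu, huA⟩) | ⟨h1, h2⟩
      · exact (Set.eq_empty_iff_forall_notMem.mp hdisj v) ⟨hvS, hvX⟩
      · have hne : G.owner v ≠ P := by cases P <;> simp_all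
        exact huA (PGame.dominion_opp_succ G hsucc P S hS hvS hne hu)
      · have heq : G.owner v = P := by
          cases hb : G.owner v <;> cases P <;> simp_all
        obtain ⟨u, hu, huS⟩ := PGame.dominion_P_succ G hsucc P S hS hvS heq
        exact h2 u hu huS
    exact OrderHom.lfp_le _ hstep
  constructor
  · rw [Set.eq_empty_iff_forall_notMem]
    rintro v ⟨hvS, hvA⟩
    exact hAtr hvA hvS
  · intro v hv
    obtain ⟨σ, hσ⟩ := hS v hv
    refine ⟨σ, fun τ hτ => ?_⟩
    have hτG : PGame.OppLegal G P σ τ v := by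
      intro i hi
      have h := hτ i (by
        show (G.restrict A).owner (PGame.play (G.restrict A) P σ τ v i) ≠ P
        rw [PGame.play_restrict]
        exact hi)
      rw [PGame.play_restrict, PGame.play_restrict] at h
      exact h.1
    obtain ⟨hleg, hmem, hwin⟩ := hσ τ hτG
    have hnA : ∀ i, PGame.play G P σ τ v i ∉ A := fun i h => hAtr h (hmem i)
    refine ⟨?_, ?_, ?_⟩
    · intro i hi
      show (G.restrict A).edge _ _
      rw [PGame.play_restrict] at hi ⊢
      rw [PGame.play_restrict]
      exact ⟨hleg i hi, hnA i, hnA (i + 1)⟩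
    · intro i
      rw [PGame.play_restrict]
      exact hmem i
    · have hρ : PGame.play (G.restrict A) P σ τ v = PGame.play G P σ τ v :=
        funext fun i => PGame.play_restrict G A P σ τ v i
      show PGame.WinsParity (G.restrict A) P (PGame.play (G.restrict A) P σ τ v)
      rw [hρ]
      exact hwin
end

section
/- Zielonka decomposition step: let G be a finite parity game with highest priority h even, N_h the set of nodes of priority h, A = Atr_E(G, N_h), and H = G \ A. If the winning region of Odd in H (with priorities bounded by h−1) is empty, then Even wins from every node of G. -/
open Filter

namespace ZK
open PGame

variable {V : Type*}

lemma bool_ne_iff {b c : Bool} : b ≠ c ↔ b = !c := by cases b <;> cases c <;> simp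

/-- consistency of a path with a positional strategy `f` for player `P` -/
def Cons (G : PGame V) (P : Bool) (f : V → V) (ρ : ℕ → V) : Prop :=
  ∀ i, (G.owner (ρ i) = P → ρ (i+1) = f (ρ i)) ∧
    (G.owner (ρ i) ≠ P → G.edge (ρ i) (ρ (i+1)))

/-- positional dominion -/
def PosDom (G : PGame V) (P : Bool) (f : V → V) (S : Set V) : Prop :=
  (∀ v ∈ S, G.owner v = P → G.edge v (f v) ∧ f v ∈ S) ∧
  (∀ v ∈ S, G.owner v ≠ P → ∀ u, G.edge v u → u ∈ S) ∧
  (∀ ρ : ℕ → V, Cons G P f ρ → ρ 0 ∈ S → WinsParity G P ρ)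

lemma cons_closed {G : PGame V} {P : Bool} {f : V → V} {S : Set V}
    (h1 : ∀ v ∈ S, G.owner v = P → G.edge v (f v) ∧ f v ∈ S)
    (h2 : ∀ v ∈ S, G.owner v ≠ P → ∀ u, G.edge v u → u ∈ S)
    {ρ : ℕ → V} (hc : Cons G P f ρ) (h0 : ρ 0 ∈ S) : ∀ i, ρ i ∈ S := by
  intro i
  induction i with
  | zero => exact h0
  | succ i ih =>
    by_cases ho : G.owner (ρ i) = P
    · rw [(hc i).1 ho]; exact (h1 _ ih ho).2
    · exact h2 _ ih ho _ ((hc i).2 ho)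

lemma cons_shift {G : PGame V} {P : Bool} {f : V → V} {ρ : ℕ → V}
    (hc : Cons G P f ρ) (K : ℕ) : Cons G P f (fun i => ρ (i + K)) := by
  intro i; simpa [Nat.add_right_comm] using hc (i + K)

lemma histList_ne_nil (G : PGame V) (P : Bool) (σ τ : List V → V) (v : V) (i : ℕ) :
    histList G P σ τ v i ≠ [] := by
  cases i with
  | zero => simp [histList]
  | succ i => simp [histList]

lemma play_zero (G : PGame V) (P : Bool) (σ τ : List V → V) (v : V) :
    play G P σ τ v 0 = v := by simp [play, histList]

lemma play_succ (G : PGame V) (P : Bool) (σ τ : List V → V) (v : V) (i : ℕ) :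
    play G P σ τ v (i + 1) =
      (if G.owner (play G P σ τ v i) = P then σ (histList G P σ τ v i)
        else τ (histList G P σ τ v i)) := by
  simp only [play, histList]
  rw [List.getLast?_concat]
  rfl

lemma posDom_winRegion {G : PGame V} {P : Bool} {f : V → V} {S : Set V}
    (hpd : PosDom G P f S) : S ⊆ WinRegion G P := by
  obtain ⟨h1, h2, h3⟩ := hpd
  intro v hv
  refine ⟨fun l => f (l.getLast?.getD v), fun τ hτ => ?_⟩
  set σ : List V → V := fun l => f (l.getLast?.getD v) with hσ
  have hs : ∀ i, σ (histList G P σ τ v i) = f (play G P σ τ v i) := fun i => rfl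
  have hcons : Cons G P f (play G P σ τ v) := by
    intro i
    constructor
    · intro hi; rw [play_succ, if_pos hi, hs]
    · intro hi; exact hτ i hi
  have hmem := cons_closed h1 h2 hcons (by rw [play_zero]; exact hv)
  refine ⟨?_, h3 _ hcons (by rw [play_zero]; exact hv)⟩
  intro i hi
  have := (h1 _ (hmem i) hi).1
  rwa [← (hcons i).1 hi] at this

lemma limsup_shift (f : ℕ → ℕ) (K : ℕ) :
    Filter.limsup (fun i => f (i + K)) Filter.atTop = Filter.limsup f Filter.atTop := by
  unfold Filter.limsup Filter.limsSup
  congr 1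
  ext a
  simp only [Filter.eventually_map, Set.mem_setOf_eq, Filter.eventually_atTop]
  constructor
  · rintro ⟨m, hm⟩
    exact ⟨m + K, fun n hn => by
      have := hm (n - K) (by omega)
      rwa [Nat.sub_add_cancel (by omega)] at this⟩
  · rintro ⟨m, hm⟩
    exact ⟨m, fun n hn => hm (n + K) (by omega)⟩

lemma winsParity_shift {G : PGame V} {P : Bool} {ρ : ℕ → V} (K : ℕ)
    (h : WinsParity G P (fun i => ρ (i + K))) : WinsParity G P ρ := by
  unfold WinsParity at *
  rwa [limsup_shift (fun i => G.prio (ρ i)) K] at h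

lemma winsParity_restrict {G : PGame V} {A : Set V} {P : Bool} {ρ : ℕ → V} :
    WinsParity (G.restrict A) P ρ ↔ WinsParity G P ρ := Iff.rfl

lemma limsup_eq_of_bdd {f : ℕ → ℕ} {p : ℕ} (hb : ∀ i, f i ≤ p)
    (hf : ∀ m, ∃ n ≥ m, f n = p) : Filter.limsup f Filter.atTop = p := by
  rw [Filter.limsup_eq]
  apply le_antisymm
  · exact csInf_le (OrderBot.bddBelow _) (Filter.Eventually.of_forall hb)
  · apply le_csInf ⟨p, Filter.Eventually.of_forall hb⟩
    intro a ha
    simp only [Set.mem_setOf_eq, Filter.eventually_atTop] at ha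
    obtain ⟨m, hm⟩ := ha
    obtain ⟨n, hn, hfn⟩ := hf m
    calc p = f n := hfn.symm
    _ ≤ a := hm n hn

end ZK
namespace ZK
open PGame

variable {V : Type*}

/-- stages of the attractor construction -/
def iter (G : PGame V) (P : Bool) (N : Set V) (m : ℕ) : Set V :=
  (attrOp G P N)^[m] ∅

lemma iter_succ (G : PGame V) (P : Bool) (N : Set V) (m : ℕ) :
    iter G P N (m+1) = attrOp G P N (iter G P N m) := by
  unfold iter; rw [Function.iterate_succ_apply']

lemma iter_mono (G : PGame V) (P : Bool) (N : Set V) :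
    Monotone (iter G P N) := by
  have key : ∀ m, iter G P N m ⊆ iter G P N (m+1) := by
    intro m
    induction m with
    | zero => simp [iter]
    | succ m ih =>
      rw [iter_succ, iter_succ]
      exact (attrOp G P N).monotone ih
  exact monotone_nat_of_le_succ key

lemma iter_subset_atr (G : PGame V) (P : Bool) (N : Set V) (m : ℕ) :
    iter G P N m ⊆ Atr G P N := by
  induction m with
  | zero => simp [iter]
  | succ m ih =>
    rw [iter_succ]
    calc attrOp G P N (iter G P N m) ⊆ attrOp G P N (Atr G P N) :=
          (attrOp G P N).monotone ih
    _ = Atr G P N := OrderHom.map_lfp _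

lemma mem_atr_iff [Finite V] {G : PGame V} {P : Bool} {N : Set V} {v : V} :
    v ∈ Atr G P N ↔ ∃ m, v ∈ iter G P N m := by
  constructor
  · intro hv
    classical
    cases nonempty_fintype V
    revert v hv
    have : Atr G P N ≤ {v | ∃ m, v ∈ iter G P N m} := by
      apply OrderHom.lfp_le
      intro v hv
      rcases hv with (hv | ⟨h1, u, hu, m, hm⟩) | ⟨h1, h2⟩
      · exact ⟨1, Or.inl (Or.inl hv)⟩
      · exact ⟨m+1, by rw [iter_succ]; exact Or.inl (Or.inr ⟨h1, u, hu, hm⟩)⟩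
      · -- all successors have stages; take max over all of V
        have hch : ∀ u : V, ∃ m, G.edge v u → u ∈ iter G P N m := by
          intro u
          by_cases he : G.edge v u
          · obtain ⟨m, hm⟩ := h2 u he
            exact ⟨m, fun _ => hm⟩
          · exact ⟨0, fun he' => absurd he' he⟩
        choose g hg using hch
        refine ⟨(Finset.univ.sup g) + 1, ?_⟩
        rw [iter_succ]
        refine Or.inr ⟨h1, fun u hu => ?_⟩
        exact iter_mono G P N (Finset.le_sup (Finset.mem_univ u)) (hg u hu)
    exact fun v hv => this hv
  · rintro ⟨m, hm⟩
    exact iter_subset_atr G P N m hm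

/-- rank of a node in the attractor -/
noncomputable def rank (G : PGame V) (P : Bool) (N : Set V) (v : V) : ℕ := by
  classical
  exact if h : ∃ m, v ∈ iter G P N m then Nat.find h else 0

lemma mem_iter_rank {G : PGame V} {P : Bool} {N : Set V} {v : V}
    (h : ∃ m, v ∈ iter G P N m) : v ∈ iter G P N (rank G P N v) := by
  classical
  rw [rank]; rw [dif_pos h]; exact Nat.find_spec h

lemma rank_le {G : PGame V} {P : Bool} {N : Set V} {v : V} {m : ℕ}
    (h : v ∈ iter G P N m) : rank G P N v ≤ m := by
  classical
  rw [rank, dif_pos ⟨m, h⟩]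
  exact Nat.find_le h

lemma rank_pos {G : PGame V} {P : Bool} {N : Set V} {v : V}
    (h : ∃ m, v ∈ iter G P N m) : 0 < rank G P N v := by
  rcases Nat.eq_zero_or_pos (rank G P N v) with h0 | h1
  · exfalso
    have := mem_iter_rank h
    rw [h0] at this
    simp [iter] at this
  · exact h1

lemma atr_unfold [Finite V] {G : PGame V} {P : Bool} {N : Set V} {v : V}
    (hv : v ∈ Atr G P N) (hvN : v ∉ N) :
    (G.owner v = P ∧ ∃ u, G.edge v u ∧ u ∈ Atr G P N ∧
        rank G P N u < rank G P N v) ∨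
    (G.owner v ≠ P ∧ ∀ u, G.edge v u → u ∈ Atr G P N ∧
        rank G P N u < rank G P N v) := by
  have hex : ∃ m, v ∈ iter G P N m := mem_atr_iff.mp hv
  have hpos := rank_pos hex
  have hmem := mem_iter_rank hex
  obtain ⟨r, hr⟩ : ∃ r, rank G P N v = r + 1 := ⟨rank G P N v - 1, by omega⟩
  rw [hr, iter_succ] at hmem
  rcases hmem with (hN | ⟨h1, u, hu, hum⟩) | ⟨h1, h2⟩
  · exact absurd hN hvN
  · left
    exact ⟨h1, u, hu, iter_subset_atr G P N r hum, by
      have := rank_le hum; omega⟩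
  · right
    refine ⟨h1, fun u hu => ?_⟩
    have := h2 u hu
    exact ⟨iter_subset_atr G P N r this, by have := rank_le this; omega⟩

lemma subset_atr (G : PGame V) (P : Bool) (N : Set V) : N ⊆ Atr G P N := by
  intro v hv
  have : v ∈ attrOp G P N (Atr G P N) := Or.inl (Or.inl hv)
  rw [Atr, ← OrderHom.map_lfp (attrOp G P N)]; exact this

/-- the complement of `P`'s attractor is a trap for `P` -/
lemma trap_P {G : PGame V} {P : Bool} {N : Set V} {v u : V}
    (hv : v ∉ Atr G P N) (ho : G.owner v = P) (he : G.edge v u) :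
    u ∉ Atr G P N := by
  intro hu
  apply hv
  have : v ∈ attrOp G P N (Atr G P N) := Or.inl (Or.inr ⟨ho, u, he, hu⟩)
  rw [Atr, ← OrderHom.map_lfp (attrOp G P N)]; exact this

lemma trap_opp {G : PGame V} {P : Bool} {N : Set V} {v : V}
    (hv : v ∉ Atr G P N) (ho : G.owner v ≠ P) (he : ∃ u, G.edge v u) :
    ∃ u, G.edge v u ∧ u ∉ Atr G P N := by
  by_contra hc
  push_neg at hc
  apply hv
  have : v ∈ attrOp G P N (Atr G P N) := Or.inr ⟨ho, fun u hu => hc u hu⟩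
  rw [Atr, ← OrderHom.map_lfp (attrOp G P N)]; exact this

/-- along a consistent path where `P` plays rank-decreasing moves inside the
attractor, from any point in the attractor the path reaches `N` -/
lemma reach [Finite V] {G : PGame V} {P : Bool} {N : Set V} {f : V → V} {ρ : ℕ → V}
    (hc : Cons G P f ρ)
    (hdec : ∀ i, ρ i ∈ Atr G P N → ρ i ∉ N → G.owner (ρ i) = P →
      f (ρ i) ∈ Atr G P N ∧ rank G P N (f (ρ i)) < rank G P N (ρ i)) :
    ∀ r i, ρ i ∈ Atr G P N → rank G P N (ρ i) ≤ r → ∃ j, i ≤ j ∧ ρ j ∈ N := by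
  intro r
  induction r with
  | zero =>
    intro i hi hr
    have := rank_pos (mem_atr_iff.mp hi)
    omega
  | succ r ih =>
    intro i hi hr
    by_cases hN : ρ i ∈ N
    · exact ⟨i, le_refl i, hN⟩
    by_cases ho : G.owner (ρ i) = P
    · obtain ⟨hA, hlt⟩ := hdec i hi hN ho
      have hstep := (hc i).1 ho
      obtain ⟨j, hj, hjN⟩ := ih (i+1) (by rw [hstep]; exact hA)
        (by rw [hstep]; omega)
      exact ⟨j, by omega, hjN⟩
    · rcases atr_unfold hi hN with ⟨ho', _⟩ | ⟨_, h2⟩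
      · exact absurd ho' ho
      obtain ⟨hA, hlt⟩ := h2 _ ((hc i).2 ho)
      obtain ⟨j, hj, hjN⟩ := ih (i+1) hA (by omega)
      exact ⟨j, by omega, hjN⟩

end ZK
namespace ZK
open PGame

variable {V : Type*}

lemma zcase [Finite V] (G : PGame V) (D : Set V) (P : Bool) (p : ℕ) (N : Set V)
    (hedge : ∀ u v, G.edge u v → u ∉ D ∧ v ∉ D)
    (hsucc : ∀ v, v ∉ D → ∃ u, G.edge v u)
    (hprio : ∀ v, v ∉ D → G.prio v ≤ p)
    (hpar : p % 2 = (if P then 0 else 1))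
    (hND : ∀ v ∈ N, v ∉ D)
    (hNp : ∀ v ∈ N, G.prio v = p)
    (fH : V → V) (SH : Set V)
    (hSH : PosDom (G.restrict (Atr G P N)) P fH SH)
    (hcov : ∀ v, v ∉ D → v ∉ Atr G P N → v ∈ SH)
    (hsub : ∀ v ∈ SH, v ∉ D ∧ v ∉ Atr G P N) :
    ∃ f, PosDom G P f Dᶜ := by
  classical
  set A := Atr G P N with hA
  have hNA : N ⊆ A := subset_atr G P N
  -- choose the strategy
  have hch : ∀ v : V, ∃ u : V,
      (v ∉ D → v ∉ A → u = fH v) ∧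
      (v ∈ A → v ∉ N → G.owner v = P →
        G.edge v u ∧ u ∈ A ∧ rank G P N u < rank G P N v) ∧
      (v ∈ N → G.owner v = P → G.edge v u) := by
    intro v
    by_cases hvA : v ∈ A
    · by_cases hvN : v ∈ N
      · by_cases ho : G.owner v = P
        · obtain ⟨u, hu⟩ := hsucc v (hND v hvN)
          exact ⟨u, fun _ h => absurd hvA h, fun _ h => absurd hvN h, fun _ _ => hu⟩
        · exact ⟨v, fun _ h => absurd hvA h, fun _ h => absurd hvN h,
            fun _ h => absurd h ho⟩
      · by_cases ho : G.owner v = P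
        · rcases atr_unfold hvA hvN with ⟨_, u, hu, huA, hur⟩ | ⟨ho', _⟩
          · exact ⟨u, fun _ h => absurd hvA h, fun _ _ _ => ⟨hu, huA, hur⟩,
              fun h => absurd h hvN⟩
          · exact absurd ho ho'
        · exact ⟨v, fun _ h => absurd hvA h, fun _ _ h => absurd h ho,
            fun h => absurd h hvN⟩
    · exact ⟨fH v, fun _ _ => rfl, fun h => absurd h hvA,
        fun h => absurd (hNA h) hvA⟩
  choose f hf1 hf2 hf3 using hch
  have hW1 : ∀ v ∈ (Dᶜ : Set V), G.owner v = P → G.edge v (f v) ∧ f v ∈ (Dᶜ : Set V) := by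
    intro v hv ho
    by_cases hvA : v ∈ A
    · by_cases hvN : v ∈ N
      · have he := hf3 v hvN ho
        exact ⟨he, (hedge _ _ he).2⟩
      · obtain ⟨he, _, _⟩ := hf2 v hvA hvN ho
        exact ⟨he, (hedge _ _ he).2⟩
    · have heq := hf1 v hv hvA
      have hmem := hcov v hv hvA
      have := hSH.1 v hmem ho
      rw [heq]
      exact ⟨this.1.1, (hsub _ this.2).1⟩
  have hW2 : ∀ v ∈ (Dᶜ : Set V), G.owner v ≠ P → ∀ u, G.edge v u → u ∈ (Dᶜ : Set V) := by
    intro v _ _ u hu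
    exact (hedge _ _ hu).2
  refine ⟨f, hW1, hW2, ?_⟩
  intro ρ hc h0
  have hmem : ∀ i, ρ i ∈ (Dᶜ : Set V) := cons_closed hW1 hW2 hc h0
  by_cases hinf : ∀ i, ∃ j, i ≤ j ∧ ρ j ∈ A
  · -- the play visits N infinitely often, so the max priority p is seen i.o.
    have hdec : ∀ i, ρ i ∈ A → ρ i ∉ N → G.owner (ρ i) = P →
        f (ρ i) ∈ A ∧ rank G P N (f (ρ i)) < rank G P N (ρ i) := by
      intro i hiA hiN ho
      obtain ⟨_, h2, h3⟩ := hf2 (ρ i) hiA hiN ho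
      exact ⟨h2, h3⟩
    have hN : ∀ i, ∃ j, i ≤ j ∧ ρ j ∈ N := by
      intro i
      obtain ⟨j, hij, hjA⟩ := hinf i
      obtain ⟨j', hj', hN⟩ := reach hc hdec (rank G P N (ρ j)) j hjA le_rfl
      exact ⟨j', le_trans hij hj', hN⟩
    have hls : Filter.limsup (fun i => G.prio (ρ i)) Filter.atTop = p := by
      apply limsup_eq_of_bdd
      · intro i; exact hprio _ (hmem i)
      · intro m
        obtain ⟨j, hj, hjN⟩ := hN m
        exact ⟨j, hj, hNp _ hjN⟩
    unfold WinsParity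
    rw [hls]; exact hpar
  · -- the play eventually stays out of A, inside the subgame H
    push_neg at hinf
    obtain ⟨K, hK⟩ := hinf
    have hK' : ∀ j, K ≤ j → ρ j ∉ A := by
      intro j hj
      by_contra hcon
      exact (hK j hj) hcon
    apply winsParity_shift K
    have h0' : ρ (0 + K) ∈ SH := by
      rw [zero_add]
      exact hcov _ (hmem K) (hK' K le_rfl)
    have hc' : Cons (G.restrict A) P fH (fun i => ρ (i + K)) := by
      intro i
      have hiK : ρ (i + K) ∉ A := hK' _ (by omega)
      have hiK1 : ρ (i + K + 1) ∉ A := hK' _ (by omega)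
      constructor
      · intro ho
        have := (hc (i + K)).1 ho
        simp only [Nat.add_right_comm i 1 K]
        rw [this]
        exact (hf1 _ (hmem (i + K)) hiK)
      · intro ho
        have := (hc (i + K)).2 ho
        simp only [Nat.add_right_comm i 1 K]
        exact ⟨this, hiK, hiK1⟩
    exact winsParity_restrict.mp (hSH.2.2 _ hc' h0')

end ZK
namespace ZK
open PGame

variable {V : Type*}

lemma posDom_empty (G : PGame V) (P : Bool) (f : V → V) : PosDom G P f ∅ := by
  refine ⟨by simp, by simp, ?_⟩
  intro ρ _ h0
  exact absurd h0 (Set.notMem_empty _)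

lemma ne_not_eq {b c : Bool} (h : b ≠ !c) : b = c := by
  cases b <;> cases c <;> simp_all

lemma eq_ne_not {b c : Bool} (h : b = c) : b ≠ !c := by
  cases b <;> cases c <;> simp_all

lemma union_bool (S : Bool → Set V) (b : Bool) :
    S true ∪ S false = S b ∪ S (!b) := by
  cases b
  · exact Set.union_comm _ _
  · rfl

lemma package (G : PGame V) (D : Set V) (P : Bool) (f : V → V) (S1 : Set V)
    (g : V → V) (S2 : Set V) (h1 : PosDom G P f S1) (h2 : PosDom G (!P) g S2)
    (hs1 : S1 ⊆ (Dᶜ : Set V)) (hs2 : S2 ⊆ (Dᶜ : Set V)) (hcov : (Dᶜ : Set V) ⊆ S1 ∪ S2) :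
    ∃ (F : Bool → V → V) (S : Bool → Set V),
      (∀ b, PosDom G b (F b) (S b) ∧ S b ⊆ (Dᶜ : Set V)) ∧
      (Dᶜ : Set V) ⊆ S true ∪ S false := by
  cases P
  · refine ⟨fun b => if b then g else f, fun b => if b then S2 else S1, ?_, ?_⟩
    · intro b; cases b
      · exact ⟨h1, hs1⟩
      · exact ⟨h2, hs2⟩
    · simpa [Set.union_comm] using hcov
  · refine ⟨fun b => if b then f else g, fun b => if b then S1 else S2, ?_, ?_⟩
    · intro b; cases b
      · exact ⟨h2, hs2⟩
      · exact ⟨h1, hs1⟩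
    · exact hcov

lemma det [Fintype V] (n : ℕ) : ∀ (k : ℕ) (G : PGame V) (D : Set V),
    k * (Fintype.card V + 1) + (Dᶜ : Set V).ncard ≤ n →
    (∀ u v, G.edge u v → u ∉ D ∧ v ∉ D) →
    (∀ v, v ∉ D → ∃ u, G.edge v u) →
    (∀ v, v ∉ D → G.prio v < k) →
    ∃ (F : Bool → V → V) (S : Bool → Set V),
      (∀ b, PosDom G b (F b) (S b) ∧ S b ⊆ (Dᶜ : Set V)) ∧
      (Dᶜ : Set V) ⊆ S true ∪ S false := by
  induction n using Nat.strong_induction_on with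
  | _ n IH =>
  intro k G D hn hedge hsucc hprio
  classical
  by_cases hDe : (Dᶜ : Set V) = ∅
  · exact ⟨fun _ v => v, fun _ => ∅, fun b => ⟨posDom_empty G b _, Set.empty_subset _⟩,
      by rw [hDe]; exact Set.empty_subset _⟩
  -- the maximal priority p among live nodes
  obtain ⟨w0, hw0⟩ := Set.nonempty_iff_ne_empty.mpr hDe
  have hw0' : w0 ∉ D := hw0
  set s : Finset ℕ := Finset.image G.prio (Finset.univ.filter (fun v => v ∉ D)) with hs
  have hsne : s.Nonempty := ⟨G.prio w0, by
    simp only [hs, Finset.mem_image]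
    exact ⟨w0, by simp [hw0'], rfl⟩⟩
  set p : ℕ := s.max' hsne with hp
  have hpmax : ∀ v, v ∉ D → G.prio v ≤ p := by
    intro v hv
    apply Finset.le_max'
    simp only [hs, Finset.mem_image]
    exact ⟨v, by simp [hv], rfl⟩
  have hpex : ∃ v, v ∉ D ∧ G.prio v = p := by
    have := s.max'_mem hsne
    rw [← hp] at this
    simp only [hs, Finset.mem_image, Finset.mem_filter, Finset.mem_univ, true_and] at this
    obtain ⟨v, hv1, hv2⟩ := this
    exact ⟨v, hv1, hv2⟩
  have hpk : p < k := by
    obtain ⟨v, hv1, hv2⟩ := hpex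
    rw [← hv2]; exact hprio v hv1
  set P : Bool := decide (p % 2 = 0) with hPdef
  have hpar : p % 2 = (if P then 0 else 1) := by
    rcases Nat.mod_two_eq_zero_or_one p with h | h <;> simp [hPdef, h]
  set N : Set V := {v | v ∉ D ∧ G.prio v = p} with hN
  set A : Set V := Atr G P N with hA
  have hNA : N ⊆ A := subset_atr G P N
  set H : PGame V := G.restrict A with hH
  set D' : Set V := D ∪ A with hD'
  have hedgeH : ∀ u v, H.edge u v → u ∉ D' ∧ v ∉ D' := by
    intro u v ⟨he, hu, hv⟩
    constructor
    · intro hc; rcases hc with hc | hc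
      · exact (hedge _ _ he).1 hc
      · exact hu hc
    · intro hc; rcases hc with hc | hc
      · exact (hedge _ _ he).2 hc
      · exact hv hc
  have hsuccH : ∀ v, v ∉ D' → ∃ u, H.edge v u := by
    intro v hv
    have hvD : v ∉ D := fun hc => hv (Or.inl hc)
    have hvA : v ∉ A := fun hc => hv (Or.inr hc)
    by_cases ho : G.owner v = P
    · obtain ⟨u, hu⟩ := hsucc v hvD
      exact ⟨u, hu, hvA, trap_P hvA ho hu⟩
    · obtain ⟨u, hu, huA⟩ := trap_opp hvA ho (hsucc v hvD)
      exact ⟨u, hu, hvA, huA⟩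
  have hprioH : ∀ v, v ∉ D' → H.prio v < p := by
    intro v hv
    have hvD : v ∉ D := fun hc => hv (Or.inl hc)
    have hvA : v ∉ A := fun hc => hv (Or.inr hc)
    have h1 : G.prio v ≤ p := hpmax v hvD
    have h2 : G.prio v ≠ p := by
      intro hc
      exact hvA (hNA ⟨hvD, hc⟩)
    have : H.prio v = G.prio v := rfl
    omega
  have hmeasH : p * (Fintype.card V + 1) + (D'ᶜ : Set V).ncard < n := by
    have h1 : (D'ᶜ : Set V).ncard ≤ Fintype.card V := by
      calc (D'ᶜ : Set V).ncard ≤ (Set.univ : Set V).ncard :=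
            Set.ncard_le_ncard (Set.subset_univ _) Set.finite_univ
      _ = Fintype.card V := by rw [Set.ncard_univ, Nat.card_eq_fintype_card]
    have h2 : (p + 1) * (Fintype.card V + 1) ≤ k * (Fintype.card V + 1) :=
      Nat.mul_le_mul_right _ hpk
    have h3 : k * (Fintype.card V + 1) ≤ n := le_trans (Nat.le_add_right _ _) hn
    have h4 : (p + 1) * (Fintype.card V + 1) = p * (Fintype.card V + 1) + Fintype.card V + 1 := by
      ring
    omega
  obtain ⟨FH, SH, hSH, hcovH⟩ := IH _ hmeasH p H D' le_rfl hedgeH hsuccH hprioH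
  have hSHsub : ∀ b, ∀ v ∈ SH b, v ∉ D ∧ v ∉ A := by
    intro b v hv
    have := (hSH b).2 hv
    simp only [hD', Set.mem_compl_iff, Set.mem_union, not_or] at this
    exact this
  set Q : Bool := !P with hQ
  by_cases hcase : SH Q = ∅
  · -- Case 1: player P wins everywhere
    have hcov' : ∀ v, v ∉ D → v ∉ A → v ∈ SH P := by
      intro v h1 h2
      have : v ∈ SH true ∪ SH false := hcovH (by
        simp only [hD', Set.mem_compl_iff, Set.mem_union, not_or]
        exact ⟨h1, h2⟩)
      rw [union_bool SH P] at this
      rcases this with h | h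
      · exact h
      · rw [← hQ, hcase] at h
        exact absurd h (Set.notMem_empty _)
    obtain ⟨f, hf⟩ := zcase G D P p N hedge hsucc hpmax hpar
      (fun v hv => hv.1) (fun v hv => hv.2) (FH P) (SH P) (hSH P).1 hcov' (hSHsub P)
    exact package G D P f (Dᶜ) (fun v => v) ∅ hf (posDom_empty G (!P) _)
      subset_rfl (Set.empty_subset _) Set.subset_union_left
  · -- Case 2: the opponent Q has a nonempty winning set W in H
    have hWne : (SH Q).Nonempty := Set.nonempty_iff_ne_empty.mpr hcase
    set W : Set V := SH Q with hW
    set B : Set V := Atr G Q W with hB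
    have hWB : W ⊆ B := subset_atr G Q W
    set T : Set V := B ∩ Dᶜ with hT
    have hWT : W ⊆ T := fun v hv => ⟨hWB hv, (hSHsub Q v hv).1⟩
    have hWQ : ∀ v ∈ W, G.owner v = Q → H.edge v (FH Q v) ∧ FH Q v ∈ W :=
      fun v hv ho => (hSH Q).1.1 v hv ho
    have hWP : ∀ v ∈ W, G.owner v ≠ Q → ∀ u, G.edge v u → u ∈ W := by
      intro v hv ho u hu
      have hvA : v ∉ A := (hSHsub Q v hv).2
      have hoP : G.owner v = P := ne_not_eq (by rw [← hQ]; exact ho)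
      have huA : u ∉ A := trap_P hvA hoP hu
      exact (hSH Q).1.2.1 v hv ho u ⟨hu, hvA, huA⟩
    have hch : ∀ v : V, ∃ u : V,
        (v ∈ W → u = FH Q v) ∧
        (v ∈ B → v ∉ W → G.owner v = Q →
          G.edge v u ∧ u ∈ B ∧ rank G Q W u < rank G Q W v) := by
      intro v
      by_cases hvW : v ∈ W
      · exact ⟨FH Q v, fun _ => rfl, fun _ h => absurd hvW h⟩
      · by_cases hvB : v ∈ B
        · by_cases ho : G.owner v = Q
          · rcases atr_unfold hvB hvW with ⟨_, u, hu, huB, hur⟩ | ⟨ho', _⟩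
            · exact ⟨u, fun h => absurd h hvW, fun _ _ _ => ⟨hu, huB, hur⟩⟩
            · exact absurd ho ho'
          · exact ⟨v, fun h => absurd h hvW, fun _ _ h => absurd h ho⟩
        · exact ⟨v, fun h => absurd h hvW, fun h => absurd h hvB⟩
    choose g1 hg11 hg12 using hch
    have hT1 : ∀ v ∈ T, G.owner v = Q → G.edge v (g1 v) ∧ g1 v ∈ T := by
      intro v hv ho
      by_cases hvW : v ∈ W
      · rw [hg11 v hvW]
        obtain ⟨⟨he, _, _⟩, hmemW⟩ := hWQ v hvW ho
        exact ⟨he, hWT hmemW⟩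
      · obtain ⟨he, hB', _⟩ := hg12 v hv.1 hvW ho
        exact ⟨he, hB', (hedge _ _ he).2⟩
    have hT2 : ∀ v ∈ T, G.owner v ≠ Q → ∀ u, G.edge v u → u ∈ T := by
      intro v hv ho u hu
      by_cases hvW : v ∈ W
      · exact hWT (hWP v hvW ho u hu)
      · rcases atr_unfold hv.1 hvW with ⟨ho', _⟩ | ⟨_, h2⟩
        · exact absurd ho' ho
        · exact ⟨(h2 u hu).1, (hedge _ _ hu).2⟩
    have hT3 : ∀ ρ : ℕ → V, Cons G Q g1 ρ → ρ 0 ∈ T → WinsParity G Q ρ := by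
      intro ρ hc h0
      have hmem : ∀ i, ρ i ∈ T := cons_closed hT1 hT2 hc h0
      have hdec : ∀ i, ρ i ∈ Atr G Q W → ρ i ∉ W → G.owner (ρ i) = Q →
          g1 (ρ i) ∈ Atr G Q W ∧ rank G Q W (g1 (ρ i)) < rank G Q W (ρ i) := by
        intro i h1 h2 h3
        obtain ⟨_, h4, h5⟩ := hg12 _ h1 h2 h3
        exact ⟨h4, h5⟩
      obtain ⟨j0, _, hj0⟩ := reach hc hdec (rank G Q W (ρ 0)) 0 (hmem 0).1 le_rfl
      have hstay : ∀ d, ρ (j0 + d) ∈ W := by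
        intro d
        induction d with
        | zero => exact hj0
        | succ d ih =>
          have hnext : ρ (j0 + d + 1) ∈ W := by
            by_cases ho : G.owner (ρ (j0 + d)) = Q
            · rw [(hc _).1 ho, hg11 _ ih]
              exact (hWQ _ ih ho).2
            · exact hWP _ ih ho _ ((hc _).2 ho)
          exact hnext
      apply winsParity_shift j0
      have hc' : Cons H Q (FH Q) (fun i => ρ (i + j0)) := by
        intro i
        have h1 : ρ (i + j0) ∈ W := by
          have := hstay i
          rwa [Nat.add_comm] at this
        have h2 : ρ (i + j0 + 1) ∈ W := by
          have := hstay (i + 1)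
          rwa [show j0 + (i + 1) = i + j0 + 1 by omega] at this
        constructor
        · intro ho
          simp only [Nat.add_right_comm i 1 j0]
          rw [(hc (i + j0)).1 ho, hg11 _ h1]
        · intro ho
          simp only [Nat.add_right_comm i 1 j0]
          exact ⟨(hc (i + j0)).2 ho, (hSHsub Q _ h1).2, (hSHsub Q _ h2).2⟩
      exact winsParity_restrict.mp ((hSH Q).1.2.2 _ hc' (by simpa using hj0))
    -- recurse on the game with B removed
    set D2 : Set V := D ∪ B with hD2
    set G2 : PGame V := G.restrict B with hG2
    have hedge2 : ∀ u v, G2.edge u v → u ∉ D2 ∧ v ∉ D2 := by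
      intro u v ⟨he, hu, hv⟩
      constructor
      · intro hcon; rcases hcon with hcon | hcon
        · exact (hedge _ _ he).1 hcon
        · exact hu hcon
      · intro hcon; rcases hcon with hcon | hcon
        · exact (hedge _ _ he).2 hcon
        · exact hv hcon
    have hsucc2 : ∀ v, v ∉ D2 → ∃ u, G2.edge v u := by
      intro v hv
      have hvD : v ∉ D := fun hcon => hv (Or.inl hcon)
      have hvB : v ∉ B := fun hcon => hv (Or.inr hcon)
      by_cases ho : G.owner v = Q
      · obtain ⟨u, hu⟩ := hsucc v hvD
        exact ⟨u, hu, hvB, trap_P hvB ho hu⟩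
      · obtain ⟨u, hu, huB⟩ := trap_opp hvB ho (hsucc v hvD)
        exact ⟨u, hu, hvB, huB⟩
    have hprio2 : ∀ v, v ∉ D2 → G2.prio v < k := by
      intro v hv
      exact hprio v (fun hcon => hv (Or.inl hcon))
    have hmeas2 : k * (Fintype.card V + 1) + (D2ᶜ : Set V).ncard < n := by
      have hss : (D2ᶜ : Set V) ⊂ (Dᶜ : Set V) := by
        rw [Set.ssubset_iff_of_subset (Set.compl_subset_compl.mpr Set.subset_union_left)]
        obtain ⟨w, hw⟩ := hWne
        exact ⟨w, (hSHsub Q w hw).1, fun hcon => hcon (Or.inr (hWB hw))⟩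
      have h5 := Set.ncard_lt_ncard hss (Set.toFinite _)
      omega
    obtain ⟨F2, S2, hS2, hcov2⟩ := IH _ hmeas2 k G2 D2 le_rfl hedge2 hsucc2 hprio2
    have hS2sub : ∀ b, ∀ v ∈ S2 b, v ∉ D ∧ v ∉ B := by
      intro b v hv
      have := (hS2 b).2 hv
      simp only [hD2, Set.mem_compl_iff, Set.mem_union, not_or] at this
      exact this
    -- player P's dominion
    have hP1 : ∀ v ∈ S2 P, G.owner v = P → G.edge v (F2 P v) ∧ F2 P v ∈ S2 P := by
      intro v hv ho
      obtain ⟨⟨he, _, _⟩, hm⟩ := (hS2 P).1.1 v hv ho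
      exact ⟨he, hm⟩
    have hP2 : ∀ v ∈ S2 P, G.owner v ≠ P → ∀ u, G.edge v u → u ∈ S2 P := by
      intro v hv ho u hu
      have hvB : v ∉ B := (hS2sub P v hv).2
      have hoQ : G.owner v = Q := by
        rw [hQ]; exact bool_ne_iff.mp ho
      have huB : u ∉ B := trap_P hvB hoQ hu
      exact (hS2 P).1.2.1 v hv ho u ⟨hu, hvB, huB⟩
    have hP3 : ∀ ρ : ℕ → V, Cons G P (F2 P) ρ → ρ 0 ∈ S2 P → WinsParity G P ρ := by
      intro ρ hc h0
      have hmem := cons_closed hP1 hP2 hc h0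
      have hc2 : Cons G2 P (F2 P) ρ := by
        intro i
        refine ⟨(hc i).1, fun ho => ?_⟩
        exact ⟨(hc i).2 ho, (hS2sub P _ (hmem i)).2, (hS2sub P _ (hmem (i+1))).2⟩
      exact winsParity_restrict.mp ((hS2 P).1.2.2 _ hc2 h0)
    -- player Q's dominion
    set gQ : V → V := fun v => if v ∈ T then g1 v else F2 Q v with hgQdef
    have hgQT : ∀ v ∈ T, gQ v = g1 v := fun v hv => if_pos hv
    have hgQnT : ∀ v, v ∉ T → gQ v = F2 Q v := fun v hv => if_neg hv
    set SQ : Set V := T ∪ S2 Q with hSQ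
    have hS2T : ∀ v ∈ S2 Q, v ∉ T := fun v hv hcon => (hS2sub Q v hv).2 hcon.1
    have hQ1 : ∀ v ∈ SQ, G.owner v = Q → G.edge v (gQ v) ∧ gQ v ∈ SQ := by
      intro v hv ho
      rcases hv with hv | hv
      · rw [hgQT v hv]
        obtain ⟨he, hm⟩ := hT1 v hv ho
        exact ⟨he, Or.inl hm⟩
      · rw [hgQnT v (hS2T v hv)]
        obtain ⟨⟨he, _, _⟩, hm⟩ := (hS2 Q).1.1 v hv ho
        exact ⟨he, Or.inr hm⟩
    have hQ2 : ∀ v ∈ SQ, G.owner v ≠ Q → ∀ u, G.edge v u → u ∈ SQ := by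
      intro v hv ho u hu
      rcases hv with hv | hv
      · exact Or.inl (hT2 v hv ho u hu)
      · by_cases huB : u ∈ B
        · exact Or.inl ⟨huB, (hedge _ _ hu).2⟩
        · exact Or.inr ((hS2 Q).1.2.1 v hv ho u ⟨hu, (hS2sub Q v hv).2, huB⟩)
    have hQ3 : ∀ ρ : ℕ → V, Cons G Q gQ ρ → ρ 0 ∈ SQ → WinsParity G Q ρ := by
      intro ρ hc h0
      have hmem := cons_closed hQ1 hQ2 hc h0
      by_cases hhit : ∃ j, ρ j ∈ T
      · obtain ⟨j, hj⟩ := hhit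
        have hstay : ∀ d, ρ (j + d) ∈ T := by
          intro d; induction d with
          | zero => exact hj
          | succ d ih =>
            have hnext : ρ (j + d + 1) ∈ T := by
              by_cases ho : G.owner (ρ (j + d)) = Q
              · rw [(hc _).1 ho, hgQT _ ih]
                exact (hT1 _ ih ho).2
              · exact hT2 _ ih ho _ ((hc _).2 ho)
            exact hnext
        apply winsParity_shift j
        have hc' : Cons G Q g1 (fun i => ρ (i + j)) := by
          intro i
          have h1 : ρ (i + j) ∈ T := by
            have := hstay i
            rwa [Nat.add_comm] at this
          constructor
          · intro ho
            simp only [Nat.add_right_comm i 1 j]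
            rw [(hc (i + j)).1 ho, hgQT _ h1]
          · intro ho
            simp only [Nat.add_right_comm i 1 j]
            exact (hc (i + j)).2 ho
        exact hT3 _ hc' (by simpa using hj)
      · push_neg at hhit
        have hmem2 : ∀ i, ρ i ∈ S2 Q := by
          intro i
          rcases hmem i with hm | hm
          · exact absurd hm (hhit i)
          · exact hm
        have hc2 : Cons G2 Q (F2 Q) ρ := by
          intro i
          constructor
          · intro ho
            rw [(hc i).1 ho, hgQnT _ (hhit i)]
          · intro ho
            exact ⟨(hc i).2 ho, (hS2sub Q _ (hmem2 i)).2, (hS2sub Q _ (hmem2 (i+1))).2⟩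
        exact winsParity_restrict.mp ((hS2 Q).1.2.2 _ hc2 (hmem2 0))
    have hSPD : S2 P ⊆ (Dᶜ : Set V) := fun v hv => (hS2sub P v hv).1
    have hSQD : SQ ⊆ (Dᶜ : Set V) := by
      intro v hv
      rcases hv with hv | hv
      · exact hv.2
      · exact (hS2sub Q v hv).1
    have hcovfin : (Dᶜ : Set V) ⊆ S2 P ∪ SQ := by
      intro v hv
      by_cases hvB : v ∈ B
      · exact Or.inr (Or.inl ⟨hvB, hv⟩)
      · have hm : v ∈ S2 true ∪ S2 false := hcov2 (by
          simp only [hD2, Set.mem_compl_iff, Set.mem_union, not_or]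
          exact ⟨hv, hvB⟩)
        rw [union_bool S2 P] at hm
        rcases hm with hm | hm
        · exact Or.inl hm
        · exact Or.inr (Or.inr (by rw [← hQ] at hm; exact hm))
    exact package G D P (F2 P) (S2 P) gQ SQ ⟨hP1, hP2, hP3⟩ ⟨hQ1, hQ2, hQ3⟩ hSPD hSQD hcovfin

end ZK
/-- Zielonka decomposition step: if `h` is the (even) highest priority of `G`,
`A` is Even's attractor of the nodes of priority `h`, and Odd wins nowhere in
the subgame `H = G \ A` (i.e. Odd's winning region of `H` contains no node of
`H`), then Even wins from every node of `G`.
(Here `true` denotes Even and `false` denotes Odd.) -/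
theorem zielonka_step {V : Type*} [Fintype V]
    (G : PGame V) (hsucc : ∀ v, ∃ u, G.edge v u)
    (hnoself : ∀ v, ¬ G.edge v v) (h : ℕ) (hEven : Even h)
    (hmax : ∀ v, G.prio v ≤ h)
    (hWO : PGame.WinRegion
        (G.restrict (PGame.Atr G true {v | G.prio v = h})) false
      ⊆ PGame.Atr G true {v | G.prio v = h}) :
    ∀ v : V, v ∈ PGame.WinRegion G true := by
  classical
  open ZK PGame in
  set N : Set V := {v | G.prio v = h} with hN
  set A : Set V := Atr G true N with hA
  have hNA : N ⊆ A := ZK.subset_atr G true N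
  set H : PGame V := G.restrict A with hH
  have hedgeH : ∀ u v, H.edge u v → u ∉ A ∧ v ∉ A := fun u v he => ⟨he.2.1, he.2.2⟩
  have hsuccH : ∀ v, v ∉ A → ∃ u, H.edge v u := by
    intro v hvA
    by_cases ho : G.owner v = true
    · obtain ⟨u, hu⟩ := hsucc v
      exact ⟨u, hu, hvA, ZK.trap_P hvA ho hu⟩
    · obtain ⟨u, hu, huA⟩ := ZK.trap_opp hvA ho (hsucc v)
      exact ⟨u, hu, hvA, huA⟩
  have hprioH : ∀ v, v ∉ A → H.prio v < h := by
    intro v hvA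
    have h1 : G.prio v ≤ h := hmax v
    have h2 : G.prio v ≠ h := fun hc => hvA (hNA hc)
    have h3 : H.prio v = G.prio v := rfl
    omega
  obtain ⟨FH, SH, hSH, hcovH⟩ := ZK.det (h * (Fintype.card V + 1) + (Aᶜ : Set V).ncard)
    h H A le_rfl hedgeH hsuccH hprioH
  have hSOe : SH false = ∅ := by
    rw [Set.eq_empty_iff_forall_notMem]
    intro x hx
    have h1 : x ∈ WinRegion H false := ZK.posDom_winRegion (hSH false).1 hx
    have h2 : x ∈ A := hWO h1
    exact (hSH false).2 hx h2
  have hcov' : ∀ v : V, v ∉ (∅ : Set V) → v ∉ Atr G true N → v ∈ SH true := by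
    intro v _ hvA
    have : v ∈ SH true ∪ SH false := hcovH hvA
    rcases this with h1 | h1
    · exact h1
    · rw [hSOe] at h1
      exact absurd h1 (Set.notMem_empty _)
  have hsub' : ∀ v ∈ SH true, v ∉ (∅ : Set V) ∧ v ∉ Atr G true N := by
    intro v hv
    exact ⟨Set.notMem_empty v, (hSH true).2 hv⟩
  obtain ⟨f, hf⟩ := ZK.zcase G (∅ : Set V) true h N
    (fun u v he => ⟨Set.notMem_empty u, Set.notMem_empty v⟩)
    (fun v _ => hsucc v)
    (fun v _ => hmax v)
    (by simpa using Nat.even_iff.mp hEven)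
    (fun v _ => Set.notMem_empty v)
    (fun v hv => hv)
    (FH true) (SH true) (hSH true).1 hcov' hsub'
  intro v
  exact ZK.posDom_winRegion hf (by simp)
end
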